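/- In a transformation semigroup (X,S) with card(S) ≥ 2, the set of proximal pairs equals the union over all proper ideals I on S (I ≠ P(S)) of the sets of pairs asymptotic modulo I: Prox(X,S) = ⋃{Asym_I(X,S) : I an ideal on S with I ≠ P(S)}. -/
import Mathlib


/-- An ideal on (the carrier of) a semigroup `S`. -/
def IsIdealOn {S : Type*} (I : Set (Set S)) : Prop :=
  I.Nonempty ∧ (∀ A ∈ I, ∀ B : Set S, B ⊆ A → B ∈ I) ∧ ∀ A ∈ I, ∀ B ∈ I, A ∪ B ∈ I

/-- Asymptoticity modulo an ideal in a transformation semigroup. -/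
def AsymMod (S X : Type*) [UniformSpace X] [SMul S X] (I : Set (Set S)) (x y : X) : Prop :=
  ∀ α ∈ uniformity X, {s : S | (s • x, s • y) ∉ α} ∈ I

/-- Proximality in a transformation semigroup (via a net encoded as a nontrivial filter). -/
def ProxPair (S X : Type*) [TopologicalSpace X] [SMul S X] (x y : X) : Prop :=
  ∃ z : X, ∃ l : Filter S, l.NeBot ∧
    Filter.Tendsto (fun s => s • x) l (nhds z) ∧ Filter.Tendsto (fun s => s • y) l (nhds z)

/-- In a transformation semigroup `(X,S)` with `card S ≥ 2`, the proximal pairs are exactly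
the pairs asymptotic modulo some proper ideal `I ≠ P(S)` on `S`. -/
theorem stmt6 {S X : Type*} [Monoid S] [Nontrivial S]
    [UniformSpace X] [CompactSpace X] [T2Space X] [MulAction S X]
    (hcont : ∀ s : S, Continuous fun x : X => s • x) (x y : X) :
    ProxPair S X x y ↔
      ∃ I : Set (Set S), IsIdealOn I ∧ I ≠ Set.univ ∧ AsymMod S X I x y := by
  constructor
  · rintro ⟨z, l, hne, hx, hy⟩
    refine ⟨{A | Aᶜ ∈ l}, ⟨⟨∅, by simp⟩, ?_, ?_⟩, ?_, ?_⟩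
    · intro A hA B hB
      exact l.sets_of_superset hA (Set.compl_subset_compl.mpr hB)
    · intro A hA B hB
      simp only [Set.mem_setOf_eq, Set.compl_union] at *
      exact l.inter_sets hA hB
    · intro h
      have : (Set.univ : Set S) ∈ {A | Aᶜ ∈ l} := h ▸ Set.mem_univ _
      simp only [Set.mem_setOf_eq, Set.compl_univ] at this
      exact hne.ne (Filter.empty_mem_iff_bot.mp this)
    · intro α hα
      have ht : Filter.Tendsto (fun s : S => (s • x, s • y)) l (uniformity X) :=
        (hx.prodMk_nhds hy).mono_right (nhds_le_uniformity z)
      have := ht hα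
      simp only [Set.mem_setOf_eq, Set.compl_setOf, not_not]
      exact this
  · rintro ⟨I, ⟨hne, hdown, hunion⟩, hproper, hasym⟩
    have h0 : (∅ : Set S) ∈ I := by
      obtain ⟨A, hA⟩ := hne
      exact hdown A hA ∅ (Set.empty_subset A)
    have huniv : (Set.univ : Set S) ∉ I := by
      intro h
      apply hproper
      ext A
      simp [hdown _ h A (Set.subset_univ A)]
    let l : Filter S :=
      { sets := {A | Aᶜ ∈ I}
        univ_sets := by simpa using h0
        sets_of_superset := fun {A B} hA hAB =>
          hdown _ hA _ (Set.compl_subset_compl.mpr hAB)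
        inter_sets := fun {A B} hA hB => by
          simpa [Set.compl_inter] using hunion _ hA _ hB }
    have hlne : l.NeBot := by
      refine ⟨fun h => huniv ?_⟩
      have : (∅ : Set S) ∈ l := h ▸ Filter.mem_bot
      have h2 : (∅ : Set S)ᶜ ∈ I := this
      simpa using h2
    let u := Ultrafilter.of l
    obtain ⟨z, hz⟩ := (isCompact_univ (X := X)).ultrafilter_le_nhds
      (u.map fun s => s • x) (by simp)
    have hx' : Filter.Tendsto (fun s : S => s • x) u (nhds z) := hz.2
    have hu : Filter.Tendsto (fun s : S => (s • x, s • y)) u (uniformity X) := by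
      intro α hα
      apply Ultrafilter.of_le l
      show {s : S | (s • x, s • y) ∈ α} ∈ l
      show {s : S | (s • x, s • y) ∈ α}ᶜ ∈ I
      have := hasym α hα
      simpa [Set.compl_setOf] using this
    exact ⟨z, u, u.neBot, hx', hx'.congr_uniformity hu⟩
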